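/- Proposition 4.1 (one-species case, main direction): Consider a reaction network with a single species (d = 1), so that each source complex y_k and product complex y'_k is a nonnegative integer, and suppose κ_k > 0 for every k. Suppose P : ℤ_{≥0} × [0,∞) → ℝ solves the chemical master equation and there is a nonconstant function c : [0,∞) → ℝ_{>0} such that P(x,t) = e^{−c(t)} c(t)^x/x! for all x and t. Then the network is of first order: every complex satisfies y_k ≤ 1 and y'_k ≤ 1 for all k. -/

import Mathlib

open Finset

/-- One-species stochastic mass-action intensity `λ_k(x) = κ_k · x!/(x - y_k)!`,
taken to be `0` when `x < y_k`. -/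
noncomputable def intensity1 (κk : ℝ) (yk : ℕ) (x : ℕ) : ℝ :=
  κk * (x.descFactorial yk : ℝ)

/-- `P` solves the one-species chemical master equation on `[0,∞)`. -/
def solvesCME1 {K : ℕ} (κ : Fin K → ℝ) (y y' : Fin K → ℕ) (P : ℕ → ℝ → ℝ) : Prop :=
  ∀ x : ℕ, ∀ t ≥ (0:ℝ),
    HasDerivWithinAt (P x)
      ((∑ k, if y' k ≤ x + y k then
          intensity1 (κ k) (y k) (x + y k - y' k) * P (x + y k - y' k) t
        else 0)
       - ∑ k, intensity1 (κ k) (y k) x * P x t)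
      (Set.Ici 0) t

lemma key_nat (x yk y'k : ℕ) (hx : y'k ≤ x) :
    (x + yk - y'k).descFactorial yk * x.factorial
      = x.descFactorial y'k * (x + yk - y'k).factorial := by
  have h1 := Nat.factorial_mul_descFactorial (show yk ≤ x + yk - y'k by omega)
  have h2 := Nat.factorial_mul_descFactorial hx
  have h3 : x + yk - y'k - yk = x - y'k := by omega
  rw [h3] at h1
  calc (x + yk - y'k).descFactorial yk * x.factorial
      = (x + yk - y'k).descFactorial yk * ((x - y'k).factorial * x.descFactorial y'k) := by
        rw [h2]
    _ = x.descFactorial y'k * ((x - y'k).factorial * (x + yk - y'k).descFactorial yk) := by ring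
    _ = x.descFactorial y'k * (x + yk - y'k).factorial := by rw [h1]

lemma gain_term (κ : ℝ) (yk y'k M x : ℕ) (hy' : y'k ≤ M) (a : ℝ) (ha : 0 < a) :
    (if y'k ≤ x + yk then
        κ * ((x + yk - y'k).descFactorial yk : ℝ) *
          (Real.exp (-a) * a ^ (x + yk - y'k) / (x + yk - y'k).factorial)
      else 0) * ((x.factorial : ℝ) * a ^ (M+1) / (Real.exp (-a) * a ^ x))
      = κ * (x.descFactorial y'k : ℝ) * a ^ (yk + (M + 1 - y'k)) := by
  by_cases hx : y'k ≤ x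
  · rw [if_pos (by omega)]
    have hz : ((x + yk - y'k).factorial : ℝ) ≠ 0 := Nat.cast_ne_zero.mpr (Nat.factorial_ne_zero _)
    have he : Real.exp (-a) ≠ 0 := Real.exp_ne_zero _
    have ha' : a ≠ 0 := ne_of_gt ha
    have hpow : a ^ (x + yk - y'k) * a ^ (M+1) = a ^ x * a ^ (yk + (M + 1 - y'k)) := by
      rw [← pow_add, ← pow_add]; congr 1; omega
    have hk : ((x + yk - y'k).descFactorial yk : ℝ) * x.factorial
        = (x.descFactorial y'k : ℝ) * (x + yk - y'k).factorial := by
      exact_mod_cast congrArg (Nat.cast : ℕ → ℝ) (key_nat x yk y'k hx)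
    have hf : ((x.factorial : ℝ)) ≠ 0 := Nat.cast_ne_zero.mpr (Nat.factorial_ne_zero _)
    field_simp
    linear_combination (κ * a ^ (x + yk - y'k) * a ^ (M+1)) * hk
      + (κ * ((x.descFactorial y'k : ℝ)) * (((x + yk - y'k).factorial : ℝ))) * hpow
  · have hd : x.descFactorial y'k = 0 := Nat.descFactorial_eq_zero_iff_lt.mpr (by omega)
    rw [hd]
    by_cases hg : y'k ≤ x + yk
    · have hd2 : (x + yk - y'k).descFactorial yk = 0 :=
        Nat.descFactorial_eq_zero_iff_lt.mpr (by omega)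
      rw [if_pos hg, hd2]
      simp
    · rw [if_neg hg]; simp

lemma loss_term (κ : ℝ) (yk M x : ℕ) (a : ℝ) (ha : 0 < a) :
    κ * (x.descFactorial yk : ℝ) * (Real.exp (-a) * a ^ x / x.factorial) *
      ((x.factorial : ℝ) * a ^ (M+1) / (Real.exp (-a) * a ^ x))
      = κ * (x.descFactorial yk : ℝ) * a ^ (M+1) := by
  have he : Real.exp (-a) ≠ 0 := Real.exp_ne_zero _
  have ha' : a ≠ 0 := ne_of_gt ha
  have hf : ((x.factorial : ℝ)) ≠ 0 := Nat.cast_ne_zero.mpr (Nat.factorial_ne_zero _)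
  field_simp

lemma lhs_term (b : ℝ) (M x : ℕ) (a : ℝ) (ha : 0 < a) :
    ((Real.exp (-a) * -b) * a ^ x + Real.exp (-a) * ((x:ℝ) * a ^ (x-1) * b)) / x.factorial *
      ((x.factorial : ℝ) * a ^ (M+1) / (Real.exp (-a) * a ^ x))
      = b * ((x:ℝ) * a ^ M - a ^ (M+1)) := by
  have he : Real.exp (-a) ≠ 0 := Real.exp_ne_zero _
  have ha' : a ≠ 0 := ne_of_gt ha
  have hf : ((x.factorial : ℝ)) ≠ 0 := Nat.cast_ne_zero.mpr (Nat.factorial_ne_zero _)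
  cases x with
  | zero => simp; field_simp
  | succ n =>
    have hpow : a ^ n * a ^ (M+1) = a ^ (n+1) * a ^ M := by
      rw [← pow_add, ← pow_add]; congr 1; omega
    have hf' : (((n+1).factorial : ℝ)) ≠ 0 := Nat.cast_ne_zero.mpr (Nat.factorial_ne_zero _)
    field_simp
    simp only [Nat.add_sub_cancel]
    linear_combination ((((n+1).factorial : ℝ)) * Real.exp (-a) * ((n:ℝ)+1) * b) * hpow

lemma dp_coeff (M m : ℕ) (hm : m ≤ M) :
    (descPochhammer ℝ m).coeff M = if m = M then 1 else 0 := by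
  rcases eq_or_lt_of_le hm with h | h
  · subst h
    rw [if_pos rfl]
    have h1 := (monic_descPochhammer ℝ m).coeff_natDegree
    rwa [descPochhammer_natDegree] at h1
  · rw [if_neg (by omega)]
    exact Polynomial.coeff_eq_zero_of_natDegree_lt (by rw [descPochhammer_natDegree]; exact h)

lemma coeffM_eq {K : ℕ} (κ : Fin K → ℝ) (y y' : Fin K → ℕ) (M : ℕ) (hM : 2 ≤ M)
    (hy : ∀ k, y k ≤ M) (hy' : ∀ k, y' k ≤ M) (bt a : ℝ)
    (hmain : ∀ x : ℕ, bt * ((x:ℝ) * a ^ M - a ^ (M+1))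
       = ∑ k, (κ k * ((x.descFactorial (y' k)):ℝ) * a ^ (y k + (M + 1 - y' k))
              - κ k * ((x.descFactorial (y k)):ℝ) * a ^ (M+1))) :
    (∑ k, if y' k = M then κ k * a ^ (y k + 1) else 0)
      = ∑ k, if y k = M then κ k * a ^ (M+1) else 0 := by
  classical
  set Q : Polynomial ℝ := Polynomial.C (bt * a ^ M) * Polynomial.X - Polynomial.C (bt * a ^ (M+1))
      - ∑ k, (Polynomial.C (κ k * a ^ (y k + (M + 1 - y' k))) * descPochhammer ℝ (y' k)
             - Polynomial.C (κ k * a ^ (M+1)) * descPochhammer ℝ (y k)) with hQdef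
  have hev : ∀ x : ℕ, Q.eval ((x:ℝ)) = 0 := by
    intro x
    have h1 : Q.eval ((x:ℝ)) = bt * a ^ M * (x:ℝ) - bt * a ^ (M+1)
        - ∑ k, (κ k * a ^ (y k + (M + 1 - y' k)) * ((x.descFactorial (y' k)):ℝ)
               - κ k * a ^ (M+1) * ((x.descFactorial (y k)):ℝ)) := by
      simp [hQdef, Polynomial.eval_finset_sum, descPochhammer_eval_eq_descFactorial]
    rw [h1, show (∑ k, (κ k * a ^ (y k + (M + 1 - y' k)) * ((x.descFactorial (y' k)):ℝ)
               - κ k * a ^ (M+1) * ((x.descFactorial (y k)):ℝ)))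
        = ∑ k, (κ k * ((x.descFactorial (y' k)):ℝ) * a ^ (y k + (M + 1 - y' k))
               - κ k * ((x.descFactorial (y k)):ℝ) * a ^ (M+1))
        from Finset.sum_congr rfl (fun k _ => by ring)]
    have h2 := hmain x
    linarith
  have hQ0 : Q = 0 := Polynomial.eq_zero_of_infinite_isRoot Q
    ((Set.infinite_range_of_injective (Nat.cast_injective : Function.Injective ((↑) : ℕ → ℝ))).mono
      (by rintro _ ⟨x, rfl⟩; exact hev x))
  have hc0 := congrArg (fun p : Polynomial ℝ => p.coeff M) hQ0
  simp only [hQdef, Polynomial.coeff_sub, Polynomial.coeff_C_mul, Polynomial.coeff_X,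
    Polynomial.finset_sum_coeff, Polynomial.coeff_C, Polynomial.coeff_zero] at hc0
  rw [if_neg (by omega : ¬ (1:ℕ) = M), if_neg (by omega : ¬ M = 0)] at hc0
  have hc1 : (∑ k, (κ k * a ^ (y k + (M + 1 - y' k)) * (if y' k = M then (1:ℝ) else 0)
      - κ k * a ^ (M+1) * (if y k = M then (1:ℝ) else 0))) = 0 := by
    have h1 : ∀ k : Fin K, (descPochhammer ℝ (y' k)).coeff M = if y' k = M then 1 else 0 :=
      fun k => dp_coeff M _ (hy' k)
    have h2 : ∀ k : Fin K, (descPochhammer ℝ (y k)).coeff M = if y k = M then 1 else 0 :=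
      fun k => dp_coeff M _ (hy k)
    simp only [h1, h2] at hc0
    linarith
  rw [show (∑ k, (κ k * a ^ (y k + (M + 1 - y' k)) * (if y' k = M then (1:ℝ) else 0)
      - κ k * a ^ (M+1) * (if y k = M then (1:ℝ) else 0)))
      = ∑ k, ((if y' k = M then κ k * a ^ (y k + 1) else 0)
             - (if y k = M then κ k * a ^ (M+1) else 0)) from Finset.sum_congr rfl (fun k _ => by
        split_ifs with h1 h2 h2 <;> simp [h1] <;> ring_nf <;> simp [h1]),
    Finset.sum_sub_distrib] at hc1
  linarith

lemma no_attain {K : ℕ} (κ : Fin K → ℝ) (y y' : Fin K → ℕ) (M : ℕ)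
    (hκ : ∀ k, 0 < κ k) (hyy' : ∀ k, y' k ≠ y k)
    (S : Set ℝ) (hSinf : S.Infinite)
    (hS : ∀ a ∈ S, (∑ k, if y' k = M then κ k * a ^ (y k + 1) else 0)
        = ∑ k, if y k = M then κ k * a ^ (M+1) else 0) :
    ∀ k, y k ≠ M ∧ y' k ≠ M := by
  classical
  set R : Polynomial ℝ :=
      (∑ k, if y' k = M then Polynomial.C (κ k) * Polynomial.X ^ (y k + 1) else 0)
    - ∑ k, if y k = M then Polynomial.C (κ k) * Polynomial.X ^ (M+1) else 0 with hRdef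
  have hR0 : R = 0 := by
    apply Polynomial.eq_zero_of_infinite_isRoot R (hSinf.mono ?_)
    intro a ha
    have := hS a ha
    simp only [hRdef, Polynomial.IsRoot, Polynomial.eval_sub, Polynomial.eval_finset_sum,
      Set.mem_setOf_eq]
    rw [show (∑ k, Polynomial.eval a
          (if y' k = M then Polynomial.C (κ k) * Polynomial.X ^ (y k + 1) else 0))
        = ∑ k, if y' k = M then κ k * a ^ (y k + 1) else 0 from
        Finset.sum_congr rfl (fun k _ => by split_ifs <;> simp),
      show (∑ k, Polynomial.eval a
          (if y k = M then Polynomial.C (κ k) * Polynomial.X ^ (M+1) else 0))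
        = ∑ k, if y k = M then κ k * a ^ (M+1) else 0 from
        Finset.sum_congr rfl (fun k _ => by split_ifs <;> simp)]
    linarith
  have hyM : ∀ k, y k ≠ M := by
    have hc := congrArg (fun p : Polynomial ℝ => p.coeff (M+1)) hR0
    simp only [hRdef, Polynomial.coeff_sub, Polynomial.finset_sum_coeff,
      Polynomial.coeff_zero] at hc
    have h1 : (∑ k, ((if y' k = M then Polynomial.C (κ k) * Polynomial.X ^ (y k + 1) else 0) :
        Polynomial ℝ).coeff (M+1)) = 0 := by
      apply Finset.sum_eq_zero; intro k _
      split_ifs with h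
      · rw [Polynomial.coeff_C_mul, Polynomial.coeff_X_pow,
          if_neg (fun hEq => hyy' k (by omega : y' k = y k))]
        ring
      · simp
    rw [h1] at hc
    have h2 : (∑ k, ((if y k = M then Polynomial.C (κ k) * Polynomial.X ^ (M+1) else 0) :
        Polynomial ℝ).coeff (M+1)) = ∑ k, (if y k = M then κ k else 0) := by
      apply Finset.sum_congr rfl; intro k _
      split_ifs with h
      · rw [Polynomial.coeff_C_mul, Polynomial.coeff_X_pow, if_pos rfl]; ring
      · simp
    rw [h2] at hc
    have h3 : (∑ k, (if y k = M then κ k else 0)) = 0 := by linarith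
    intro k hk
    have h4 := (Finset.sum_eq_zero_iff_of_nonneg (fun j _ => by
      split_ifs with h; exacts [(hκ j).le, le_rfl])).mp h3 k (Finset.mem_univ k)
    rw [if_pos hk] at h4
    exact absurd h4 (ne_of_gt (hκ k))
  refine fun k => ⟨hyM k, fun hk' => ?_⟩
  have hc := congrArg (fun p : Polynomial ℝ => p.coeff (y k + 1)) hR0
  simp only [hRdef, Polynomial.coeff_sub, Polynomial.finset_sum_coeff,
    Polynomial.coeff_zero] at hc
  have h2 : (∑ j, ((if y j = M then Polynomial.C (κ j) * Polynomial.X ^ (M+1) else 0) :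
      Polynomial ℝ).coeff (y k + 1)) = 0 :=
    Finset.sum_eq_zero (fun j _ => by rw [if_neg (hyM j)]; simp)
  rw [h2] at hc
  have h1 : (∑ j, ((if y' j = M then Polynomial.C (κ j) * Polynomial.X ^ (y j + 1) else 0) :
      Polynomial ℝ).coeff (y k + 1)) = 0 := by linarith
  have h4 := (Finset.sum_eq_zero_iff_of_nonneg (fun j _ => by
    split_ifs with h
    · rw [Polynomial.coeff_C_mul, Polynomial.coeff_X_pow]
      split_ifs with h'
      exacts [by rw [mul_one]; exact (hκ j).le, by rw [mul_zero]]
    · simp)).mp h1 k (Finset.mem_univ k)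
  rw [if_pos hk', Polynomial.coeff_C_mul, Polynomial.coeff_X_pow, if_pos rfl, mul_one] at h4
  exact absurd h4 (ne_of_gt (hκ k))

/-- Proposition 4.1 (one-species case, main direction): if a one-species network with
positive rate constants admits a solution of the chemical master equation that is Poisson
with nonconstant positive mean `c(t)` for all `t ≥ 0`, then the network is of first order:
every complex satisfies `y_k ≤ 1` and `y'_k ≤ 1`. -/
theorem oneSpecies_nonconstant_Poisson_implies_firstOrder
    {K : ℕ} (κ : Fin K → ℝ) (y y' : Fin K → ℕ)
    (hκ : ∀ k, 0 < κ k) (hyy' : ∀ k, y' k ≠ y k)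
    (P : ℕ → ℝ → ℝ) (c : ℝ → ℝ)
    (hcpos : ∀ t ≥ (0:ℝ), 0 < c t)
    (hnonconst : ∃ s ≥ (0:ℝ), ∃ t ≥ (0:ℝ), c s ≠ c t)
    (hCME : solvesCME1 κ y y' P)
    (hPoisson : ∀ x : ℕ, ∀ t ≥ (0:ℝ),
      P x t = Real.exp (-(c t)) * (c t) ^ x / x.factorial) :
    ∀ k, y k ≤ 1 ∧ y' k ≤ 1 := by
  classical
  intro k₀
  by_contra hk₀
  set M := Finset.univ.sup (fun k => max (y k) (y' k)) with hMdef
  have hsup : ∀ k, max (y k) (y' k) ≤ M := by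
    intro k
    have h := Finset.le_sup (f := fun k => max (y k) (y' k)) (Finset.mem_univ k)
    rw [← hMdef] at h
    exact h
  have hyle : ∀ k, y k ≤ M := fun k => le_trans (le_max_left _ _) (hsup k)
  have hy'le : ∀ k, y' k ≤ M := fun k => le_trans (le_max_right _ _) (hsup k)
  have hM2 : 2 ≤ M := by
    rcases not_and_or.mp hk₀ with h | h
    · have := hyle k₀; omega
    · have := hy'le k₀; omega
  -- differentiability of c
  have hb : ∀ t, 0 ≤ t → HasDerivWithinAt c (derivWithin c (Set.Ici 0) t) (Set.Ici 0) t := by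
    intro t ht
    have h0 := hCME 0 t ht
    have hP0 : ∀ s ∈ Set.Ici (0:ℝ), P 0 s = Real.exp (-(c s)) := by
      intro s hs; rw [hPoisson 0 s hs]; simp
    have h1 := h0.congr (f₁ := fun s => Real.exp (-(c s)))
      (fun s hs => (hP0 s hs).symm) (hP0 t ht).symm
    have h2 := h1.log (Real.exp_ne_zero _)
    have h3 := h2.congr (f₁ := fun s => -(c s)) (fun s hs => (Real.log_exp _).symm)
      (Real.log_exp _).symm
    have h4 := h3.neg
    rw [show (-fun s => -c s) = c from by ext; simp] at h4
    exact h4.differentiableWithinAt.hasDerivWithinAt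
  -- master identity
  have hE : ∀ t, 0 ≤ t → ∀ x : ℕ,
      derivWithin c (Set.Ici 0) t * ((x:ℝ) * c t ^ M - c t ^ (M+1))
        = ∑ k, (κ k * ((x.descFactorial (y' k)):ℝ) * c t ^ (y k + (M + 1 - y' k))
              - κ k * ((x.descFactorial (y k)):ℝ) * c t ^ (M+1)) := by
    intro t ht x
    have ha : 0 < c t := hcpos t ht
    have hu := uniqueDiffOn_Ici (0:ℝ) t ht
    have hbt := hb t ht
    have h1 := (hbt.neg).exp
    have h2 := hbt.pow x
    have h3 := (h1.mul h2).div_const (x.factorial : ℝ)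
    have h4 := h3.congr (f₁ := P x) (fun s hs => hPoisson x s hs) (hPoisson x t ht)
    have heq := (h4.derivWithin hu).symm.trans ((hCME x t ht).derivWithin hu)
    have hgain : ∀ k : Fin K,
        (if y' k ≤ x + y k then
            intensity1 (κ k) (y k) (x + y k - y' k) * P (x + y k - y' k) t else 0)
        = (if y' k ≤ x + y k then
            κ k * (((x + y k - y' k).descFactorial (y k)):ℝ) *
              (Real.exp (-(c t)) * c t ^ (x + y k - y' k) / (x + y k - y' k).factorial)
          else 0) := by
      intro k
      split_ifs with h
      · rw [hPoisson _ t ht]; simp only [intensity1]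
      · rfl
    have hloss : ∀ k : Fin K, intensity1 (κ k) (y k) x * P x t
        = κ k * ((x.descFactorial (y k)):ℝ) * (Real.exp (-(c t)) * c t ^ x / x.factorial) := by
      intro k
      rw [hPoisson x t ht]; simp only [intensity1]
    rw [Finset.sum_congr rfl (fun k _ => hgain k),
        Finset.sum_congr rfl (fun k _ => hloss k)] at heq
    have h6 := congrArg
      (fun z => z * ((x.factorial:ℝ) * c t ^ (M+1) / (Real.exp (-(c t)) * c t ^ x))) heq
    simp only [Pi.neg_apply, Pi.pow_apply] at h6
    rw [lhs_term _ M x _ ha, sub_mul, Finset.sum_mul, Finset.sum_mul,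
      Finset.sum_congr rfl (fun k _ => gain_term (κ k) (y k) (y' k) M x (hy'le k) _ ha),
      Finset.sum_congr rfl (fun k _ => loss_term (κ k) (y k) M x _ ha),
      ← Finset.sum_sub_distrib] at h6
    exact h6
  -- the image of c is infinite
  obtain ⟨s, hs, t, ht, hne⟩ := hnonconst
  have hcont : ContinuousOn c (Set.Ici 0) := fun u hu => (hb u hu).continuousWithinAt
  have hsub1 : Set.uIcc s t ⊆ Set.Ici 0 := by
    intro u hu
    rw [Set.uIcc_eq_union] at hu
    rcases hu with h | h
    · exact le_trans hs h.1
    · exact le_trans ht h.1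
  have himg : Set.uIcc (c s) (c t) ⊆ c '' Set.Ici 0 :=
    (intermediate_value_uIcc (hcont.mono hsub1)).trans (Set.image_mono (f := c) hsub1)
  have hSinf : (c '' Set.Ici 0).Infinite := by
    refine (Set.Icc_infinite (min_lt_max.mpr hne)).mono ?_
    rw [Set.uIcc] at himg
    exact himg
  have hnoatt := no_attain κ y y' M hκ hyy' (c '' Set.Ici 0) hSinf (by
    rintro a ⟨u, hu, rfl⟩
    exact coeffM_eq κ y y' M hM2 hyle hy'le _ _ (hE u hu))
  obtain ⟨k1, -, hk1⟩ := Finset.exists_mem_eq_sup Finset.univ ⟨k₀, Finset.mem_univ k₀⟩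
    (fun k => max (y k) (y' k))
  have h1 := (hnoatt k1).1
  have h2 := (hnoatt k1).2
  rw [hMdef] at h1 h2
  omega
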